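/- Let m ≥ 1. Let Q be the quotient topological space of D^m × [0,1] by the equivalence relation generated by (y,t) ~ (y,t') for all y ∈ D^m with ‖y‖ = 1 and all t, t' ∈ [0,1], and let q : D^m × [0,1] → Q be the quotient map. Then there exists a homeomorphism h : Q → D^{m+1} such that h maps the set q(D^m × {0,1}) (the union of the images of the front cover D^m × {0} and the back cover D^m × {1}) onto the unit sphere S^m = {x ∈ D^{m+1} : ‖x‖ = 1}. -/

import Mathlib

open Metric unitInterval

noncomputable section

/-- The closed unit ball (disk) in `EuclideanSpace ℝ (Fin m)`. -/
def Disk (m : ℕ) : Set (EuclideanSpace ℝ (Fin m)) := Metric.closedBall 0 1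

/-- The relation generating the half open book quotient on the disk page:
`(y, t) ~ (y, t')` for all `y` with `‖y‖ = 1` and all `t, t' ∈ [0,1]`. -/
def hobRel (m : ℕ) (p q : ↥(Disk m) × I) : Prop :=
  p.1 = q.1 ∧ ‖(p.1 : EuclideanSpace ℝ (Fin m))‖ = 1

namespace HOBAux

variable {m : ℕ}

/-- Norm squared of an element of Euclidean space as a sum of squares. -/
lemma norm_sq_eq (n : ℕ) (x : EuclideanSpace ℝ (Fin n)) :
    ‖x‖ ^ 2 = ∑ i, x i ^ 2 := by
  rw [EuclideanSpace.norm_eq, Real.sq_sqrt (by positivity)]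
  simp [Real.norm_eq_abs, sq_abs]

/-- Build a point of `EuclideanSpace ℝ (Fin (m+1))` from a point of
`EuclideanSpace ℝ (Fin m)` and a last coordinate. -/
def snocE (y : EuclideanSpace ℝ (Fin m)) (s : ℝ) : EuclideanSpace ℝ (Fin (m + 1)) :=
  (EuclideanSpace.equiv (Fin (m + 1)) ℝ).symm
    (Fin.snoc ((EuclideanSpace.equiv (Fin m) ℝ) y) s)

@[simp] lemma snocE_castSucc (y : EuclideanSpace ℝ (Fin m)) (s : ℝ) (i : Fin m) :
    snocE y s i.castSucc = y i := by
  simp [snocE]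

@[simp] lemma snocE_last (y : EuclideanSpace ℝ (Fin m)) (s : ℝ) :
    snocE y s (Fin.last m) = s := by
  simp [snocE]

lemma norm_sq_snocE (y : EuclideanSpace ℝ (Fin m)) (s : ℝ) :
    ‖snocE y s‖ ^ 2 = ‖y‖ ^ 2 + s ^ 2 := by
  rw [norm_sq_eq, norm_sq_eq, Fin.sum_univ_castSucc]
  simp

lemma snocE_injective : Function.Injective fun p : EuclideanSpace ℝ (Fin m) × ℝ =>
    snocE p.1 p.2 := by
  rintro ⟨y, s⟩ ⟨y', s'⟩ h
  simp only [Prod.mk.injEq]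
  constructor
  · ext i
    have := congrFun (congrArg (fun x : EuclideanSpace ℝ (Fin (m+1)) => (x : Fin (m+1) → ℝ))
      h) i.castSucc
    simpa using this
  · have := congrFun (congrArg (fun x : EuclideanSpace ℝ (Fin (m+1)) => (x : Fin (m+1) → ℝ))
      h) (Fin.last m)
    simpa using this

lemma snocE_surj (x : EuclideanSpace ℝ (Fin (m + 1))) :
    snocE ((EuclideanSpace.equiv (Fin m) ℝ).symm fun i => x i.castSucc) (x (Fin.last m)) = x := by
  apply (EuclideanSpace.equiv (Fin (m + 1)) ℝ).injective
  funext i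
  refine Fin.lastCases ?_ (fun j => ?_) i
  · simp [snocE]
  · simp [snocE]

lemma continuous_snocE : Continuous fun p : EuclideanSpace ℝ (Fin m) × ℝ => snocE p.1 p.2 := by
  refine ((EuclideanSpace.equiv (Fin (m + 1)) ℝ).symm.continuous).comp ?_
  refine continuous_pi fun i => ?_
  refine Fin.lastCases ?_ (fun j => ?_) i
  · simpa using continuous_snd
  · simp; exact (continuous_apply j).comp
      ((PiLp.continuous_ofLp 2 (fun _ : Fin m => ℝ)).comp continuous_fst)

/-- The square root factor. -/
def rad (y : EuclideanSpace ℝ (Fin m)) : ℝ := Real.sqrt (1 - ‖y‖ ^ 2)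

/-- The map from the half open book page to the `(m+1)`-disk, before quotienting. -/
def F (p : ↥(Disk m) × I) : EuclideanSpace ℝ (Fin (m + 1)) :=
  snocE (p.1 : EuclideanSpace ℝ (Fin m)) ((2 * (p.2 : ℝ) - 1) * rad (p.1 : EuclideanSpace ℝ (Fin m)))

lemma norm_le_one (p : ↥(Disk m)) : ‖(p : EuclideanSpace ℝ (Fin m))‖ ≤ 1 :=
  mem_closedBall_zero_iff.mp p.2

lemma rad_sq (p : ↥(Disk m)) : rad (p : EuclideanSpace ℝ (Fin m)) ^ 2
    = 1 - ‖(p : EuclideanSpace ℝ (Fin m))‖ ^ 2 := by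
  have h := norm_le_one p
  have h0 : (0:ℝ) ≤ ‖(p : EuclideanSpace ℝ (Fin m))‖ := norm_nonneg _
  rw [rad, Real.sq_sqrt (by nlinarith)]

lemma norm_F_sq (p : ↥(Disk m) × I) :
    ‖F p‖ ^ 2 = ‖(p.1 : EuclideanSpace ℝ (Fin m))‖ ^ 2
      + (2 * (p.2 : ℝ) - 1) ^ 2 * (1 - ‖(p.1 : EuclideanSpace ℝ (Fin m))‖ ^ 2) := by
  rw [F, norm_sq_snocE, mul_pow, rad_sq]

lemma F_mem (p : ↥(Disk m) × I) : F p ∈ Disk (m + 1) := by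
  have h := norm_le_one p.1
  have h0 : (0:ℝ) ≤ ‖(p.1 : EuclideanSpace ℝ (Fin m))‖ := norm_nonneg _
  have ht0 : (0:ℝ) ≤ (p.2 : ℝ) := p.2.2.1
  have ht1 : (p.2 : ℝ) ≤ 1 := p.2.2.2
  have hF := norm_F_sq p
  have hFn : (0:ℝ) ≤ ‖F p‖ := norm_nonneg _
  have hb : (2 * (p.2 : ℝ) - 1) ^ 2 ≤ 1 := by nlinarith
  have hcn : (0:ℝ) ≤ 1 - ‖(p.1 : EuclideanSpace ℝ (Fin m))‖ ^ 2 := by nlinarith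
  have : ‖F p‖ ^ 2 ≤ 1 := by
    rw [hF]
    nlinarith [mul_le_of_le_one_left hcn hb]
  refine mem_closedBall_zero_iff.mpr ?_
  rw [show (1:ℝ) = Real.sqrt 1 by simp, show ‖F p‖ = Real.sqrt (‖F p‖ ^ 2) by
    rw [Real.sqrt_sq hFn]]
  exact Real.sqrt_le_sqrt this

lemma continuous_F : Continuous (F (m := m)) := by
  have heq : (F (m := m)) = (fun q : EuclideanSpace ℝ (Fin m) × ℝ => snocE q.1 q.2) ∘
      (fun p : ↥(Disk m) × I => ((p.1 : EuclideanSpace ℝ (Fin m)),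
        (2 * (p.2 : ℝ) - 1) * rad (p.1 : EuclideanSpace ℝ (Fin m)))) := rfl
  rw [heq]
  refine continuous_snocE.comp (Continuous.prodMk
    (continuous_subtype_val.comp continuous_fst) (Continuous.mul (by fun_prop) ?_))
  have hr : Continuous (rad (m := m)) := Real.continuous_sqrt.comp (by fun_prop)
  exact hr.comp (continuous_subtype_val.comp continuous_fst)

/-- The induced map to the disk (as a subtype). -/
def f (p : ↥(Disk m) × I) : ↥(Disk (m + 1)) := ⟨F p, F_mem p⟩

lemma f_resp : ∀ p q, hobRel m p q → f p = f q := by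
  rintro ⟨y, t⟩ ⟨y', t'⟩ ⟨h1, h2⟩
  subst h1
  apply Subtype.ext
  show F _ = F _
  simp [F, rad, h2]

lemma f_inj : ∀ p q : ↥(Disk m) × I, f p = f q → Quot.mk (hobRel m) p = Quot.mk (hobRel m) q := by
  rintro ⟨y, t⟩ ⟨y', t'⟩ h
  have hF : F (y, t) = F (y', t') := congrArg Subtype.val h
  have := snocE_injective (a₁ := ((y : EuclideanSpace ℝ (Fin m)),
      (2 * (t : ℝ) - 1) * rad (y : EuclideanSpace ℝ (Fin m))))
    (a₂ := ((y' : EuclideanSpace ℝ (Fin m)),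
      (2 * (t' : ℝ) - 1) * rad (y' : EuclideanSpace ℝ (Fin m)))) hF
  obtain ⟨hy, hs⟩ := Prod.mk.injEq .. ▸ this
  have hyy : y = y' := Subtype.ext hy
  subst hyy
  by_cases hnorm : ‖(y : EuclideanSpace ℝ (Fin m))‖ = 1
  · exact Quot.sound ⟨rfl, hnorm⟩
  · have hlt : ‖(y : EuclideanSpace ℝ (Fin m))‖ < 1 := lt_of_le_of_ne (norm_le_one y) hnorm
    have h0 : (0:ℝ) ≤ ‖(y : EuclideanSpace ℝ (Fin m))‖ := norm_nonneg _
    have hrad : 0 < rad (y : EuclideanSpace ℝ (Fin m)) := by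
      rw [rad]; apply Real.sqrt_pos.mpr; nlinarith
    have : (2 * (t : ℝ) - 1) = (2 * (t' : ℝ) - 1) := by
      exact mul_right_cancel₀ (ne_of_gt hrad) hs
    have : (t : ℝ) = (t' : ℝ) := by linarith
    have : t = t' := Subtype.ext this
    rw [this]

lemma f_surj : Function.Surjective (f (m := m)) := by
  intro x
  set y0 : EuclideanSpace ℝ (Fin m) :=
    (EuclideanSpace.equiv (Fin m) ℝ).symm fun i => (x : EuclideanSpace ℝ (Fin (m+1))) i.castSucc
    with hy0
  set s : ℝ := (x : EuclideanSpace ℝ (Fin (m+1))) (Fin.last m) with hs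
  have hxs : snocE y0 s = (x : EuclideanSpace ℝ (Fin (m+1))) := snocE_surj _
  have hnormx : ‖(x : EuclideanSpace ℝ (Fin (m+1)))‖ ≤ 1 := norm_le_one x
  have hsum : ‖y0‖ ^ 2 + s ^ 2 = ‖(x : EuclideanSpace ℝ (Fin (m+1)))‖ ^ 2 := by
    rw [← hxs, norm_sq_snocE]
  have h0x : (0:ℝ) ≤ ‖(x : EuclideanSpace ℝ (Fin (m+1)))‖ := norm_nonneg _
  have hy0n : (0:ℝ) ≤ ‖y0‖ := norm_nonneg _
  have hy0le : ‖y0‖ ≤ 1 := by nlinarith [sq_nonneg s]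
  have hy0mem : y0 ∈ Disk m := by simp [Disk, mem_closedBall_zero_iff, hy0le]
  set c : ℝ := rad y0 with hc
  have hcnn : 0 ≤ c := Real.sqrt_nonneg _
  have hc2 : c ^ 2 = 1 - ‖y0‖ ^ 2 := rad_sq ⟨y0, hy0mem⟩
  have hs2 : s ^ 2 ≤ c ^ 2 := by nlinarith
  have habs : |s| ≤ c := by
    calc |s| = Real.sqrt (s ^ 2) := (Real.sqrt_sq_eq_abs s).symm
    _ ≤ Real.sqrt (c ^ 2) := Real.sqrt_le_sqrt hs2
    _ = c := Real.sqrt_sq hcnn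
  set t : ℝ := (s / c + 1) / 2 with ht
  have htmem : t ∈ Set.Icc (0:ℝ) 1 := by
    by_cases hc0 : c = 0
    · simp [ht, hc0]; norm_num
    · have hcpos : 0 < c := lt_of_le_of_ne hcnn (Ne.symm hc0)
      have h1 : -1 ≤ s / c := by
        rw [le_div_iff₀ hcpos]; nlinarith [abs_le.mp habs]
      have h2 : s / c ≤ 1 := by
        rw [div_le_iff₀ hcpos]; nlinarith [abs_le.mp habs]
      constructor <;> [linarith; linarith]
  refine ⟨(⟨y0, hy0mem⟩, ⟨t, htmem⟩), ?_⟩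
  apply Subtype.ext
  show F _ = _
  rw [F]
  have : (2 * t - 1) * rad y0 = s := by
    by_cases hc0 : c = 0
    · have hs0 : s = 0 := by nlinarith [sq_nonneg s, hc0 ▸ hs2]
      rw [← hc, hc0, hs0, mul_zero]
    · have : 2 * t - 1 = s / c := by rw [ht]; ring
      rw [← hc, this, div_mul_cancel₀ _ hc0]
  show snocE _ _ = _
  rw [this]
  exact hxs

/-- The equivalence. -/
def e (m : ℕ) : Quot (hobRel m) ≃ ↥(Disk (m + 1)) :=
  Equiv.ofBijective (Quot.lift f f_resp)
    ⟨by rintro ⟨p⟩ ⟨q⟩ h; exact f_inj p q h,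
     fun x => by obtain ⟨p, hp⟩ := f_surj x; exact ⟨Quot.mk _ p, hp⟩⟩

lemma continuous_e (m : ℕ) : Continuous (e m) :=
  continuous_quot_lift _ (continuous_F.subtype_mk _)

instance : CompactSpace ↥(Disk m) :=
  isCompact_iff_compactSpace.mp (isCompact_closedBall 0 1)

/-- The homeomorphism. -/
def h (m : ℕ) : Quot (hobRel m) ≃ₜ ↥(Disk (m + 1)) :=
  Continuous.homeoOfEquivCompactToT2 (f := e m) (continuous_e m)

end HOBAux

/-- There is a homeomorphism from the half open book on the `m`-disk page to the
`(m+1)`-disk carrying the union of the images of the front cover `D^m × {0}` and the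
back cover `D^m × {1}` onto the boundary unit sphere. -/
theorem halfOpenBook_disk_boundary (m : ℕ) (hm : 1 ≤ m) :
    ∃ h : Quot (hobRel m) ≃ₜ ↥(Disk (m + 1)),
      ⇑h '' (Quot.mk (hobRel m) '' {p : ↥(Disk m) × I | p.2 = 0 ∨ p.2 = 1}) =
        {x : ↥(Disk (m + 1)) | ‖(x : EuclideanSpace ℝ (Fin (m + 1)))‖ = 1} := by
  refine ⟨HOBAux.h m, ?_⟩
  rw [← Set.image_comp]
  have hcomp : ⇑(HOBAux.h m) ∘ Quot.mk (hobRel m) = HOBAux.f := rfl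
  rw [hcomp]
  ext x
  simp only [Set.mem_image, Set.mem_setOf_eq]
  constructor
  · rintro ⟨⟨y, t⟩, ht, rfl⟩
    have h1 := HOBAux.norm_F_sq (m := m) (y, t)
    have hsq : ‖HOBAux.F (y, t)‖ ^ 2 = 1 := by
      rcases ht with ht | ht <;> subst ht <;>
        · rw [h1]; push_cast; ring
    have hnn : (0:ℝ) ≤ ‖HOBAux.F (y, t)‖ := norm_nonneg _
    show ‖HOBAux.F (y, t)‖ = 1
    nlinarith
  · intro hx
    set y0 : EuclideanSpace ℝ (Fin m) :=
      (EuclideanSpace.equiv (Fin m) ℝ).symm fun i => (x : EuclideanSpace ℝ (Fin (m+1))) i.castSucc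
      with hy0
    set s : ℝ := (x : EuclideanSpace ℝ (Fin (m+1))) (Fin.last m) with hs
    have hxs : HOBAux.snocE y0 s = (x : EuclideanSpace ℝ (Fin (m+1))) := HOBAux.snocE_surj _
    have hsum : ‖y0‖ ^ 2 + s ^ 2 = 1 := by
      have h2 := HOBAux.norm_sq_snocE y0 s
      rw [hxs, hx] at h2
      norm_num at h2
      linarith
    have hy0n : (0:ℝ) ≤ ‖y0‖ := norm_nonneg _
    have hy0le : ‖y0‖ ≤ 1 := by nlinarith [sq_nonneg s]
    have hy0mem : y0 ∈ Disk m := mem_closedBall_zero_iff.mpr hy0le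
    have hcnn : (0:ℝ) ≤ HOBAux.rad y0 := Real.sqrt_nonneg _
    have hc2 : HOBAux.rad y0 ^ 2 = 1 - ‖y0‖ ^ 2 := HOBAux.rad_sq ⟨y0, hy0mem⟩
    have hs2 : s ^ 2 = HOBAux.rad y0 ^ 2 := by linarith
    rcases le_or_gt 0 s with hsn | hsn
    · have hsc : s = HOBAux.rad y0 := by
        calc s = Real.sqrt (s ^ 2) := (Real.sqrt_sq hsn).symm
        _ = Real.sqrt (HOBAux.rad y0 ^ 2) := by rw [hs2]
        _ = HOBAux.rad y0 := Real.sqrt_sq hcnn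
      refine ⟨(⟨y0, hy0mem⟩, 1), Or.inr rfl, ?_⟩
      apply Subtype.ext
      show HOBAux.snocE y0 ((2 * ((1 : I) : ℝ) - 1) * HOBAux.rad y0) = _
      rw [show ((1 : I) : ℝ) = 1 from rfl, show (2 * (1:ℝ) - 1) * HOBAux.rad y0 = s by
        rw [hsc]; ring]
      exact hxs
    · have hsc : s = -HOBAux.rad y0 := by
        have : -s = Real.sqrt ((-s) ^ 2) := (Real.sqrt_sq (by linarith)).symm
        have h3 : -s = HOBAux.rad y0 := by
          rw [this, show (-s)^2 = HOBAux.rad y0 ^ 2 by rw [neg_pow]; norm_num; linarith,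
            Real.sqrt_sq hcnn]
        linarith
      refine ⟨(⟨y0, hy0mem⟩, 0), Or.inl rfl, ?_⟩
      apply Subtype.ext
      show HOBAux.snocE y0 ((2 * ((0 : I) : ℝ) - 1) * HOBAux.rad y0) = _
      rw [show ((0 : I) : ℝ) = 0 from rfl, show (2 * (0:ℝ) - 1) * HOBAux.rad y0 = s by
        rw [hsc]; ring]
      exact hxs
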